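/- arXiv:1307.4813 — 2 statements merged into one kernel-verified Lean document; each statement's English description precedes it below -/
import Mathlib

section
/- Let P be a probability measure on ℝ_+^T. Then for every x > 0, the supremum of E_P[U(x + (Δ·S)_T + h·g)] over all trading strategies (Δ,h) with measurable Δ equals the supremum of the same quantity over trading strategies (Δ,h) in which every component Δ_j : ℝ_+^j → ℝ is continuous and bounded. -/
open MeasureTheory Filter Topology Set
open scoped NNReal ENNReal

noncomputable section

/-- The dynamic part of a semi-static trading strategy: for each `j : Fin (T-1)`
(representing the paper's time index `j+1 ∈ {1,…,T-1}`), a function of the first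
`j+1` stock prices `s_1,…,s_{j+1}`. -/
abbrev Strategy (T : ℕ) := (j : Fin (T - 1)) → (Fin (j.1 + 1) → ℝ≥0) → ℝ

/-- Restriction of a path to its first `j+1` coordinates. -/
def restrictPath {T : ℕ} (j : Fin (T - 1)) (ω : Fin T → ℝ≥0) (k : Fin (j.1 + 1)) : ℝ≥0 :=
  ω ⟨k.1, by have h1 := j.isLt; have h2 := k.isLt; omega⟩

/-- Terminal gain `(Δ·S)_T = ∑_{j=1}^{T-1} Δ_j(s_1,…,s_j)(s_{j+1} - s_j)` of a dynamic
strategy (coordinate `i : Fin T` of a path is the stock price `s_{i+1}` at time `i+1`). -/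
def stockGain {T : ℕ} (Δ : Strategy T) (ω : Fin T → ℝ≥0) : ℝ :=
  ∑ j : Fin (T - 1), Δ j (restrictPath j ω) *
    ((ω ⟨j.1 + 1, by have := j.isLt; omega⟩ : ℝ) - (ω ⟨j.1, by have := j.isLt; omega⟩ : ℝ))

/-- Payoff `h·g` of a static option portfolio. -/
def optionGain {T N : ℕ} (g : Fin N → (Fin T → ℝ≥0) → ℝ) (h : Fin N → ℝ) (ω : Fin T → ℝ≥0) : ℝ :=
  ∑ i, h i * g i ω

/-- Terminal wealth `x + (Δ·S)_T + h·g` of a semi-static strategy with initial capital `x`. -/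
def wealth {T N : ℕ} (g : Fin N → (Fin T → ℝ≥0) → ℝ) (x : ℝ) (Δ : Strategy T)
    (h : Fin N → ℝ) (ω : Fin T → ℝ≥0) : ℝ :=
  x + stockGain Δ ω + optionGain g h ω

/-- The σ-algebra generated by the first `k` coordinates, i.e. by `S_1,…,S_k`
(the natural filtration of `S` at time `k`). -/
def Flt (T k : ℕ) : MeasurableSpace (Fin T → ℝ≥0) :=
  MeasurableSpace.comap
    (fun ω (i : Fin (min k T)) => ω ⟨i.1, lt_of_lt_of_le i.isLt (min_le_right k T)⟩) inferInstance

/-- The canonical process `S` is a `Q`-martingale in its natural filtration: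
each `S_i` is integrable and `E_Q[S_{j+1} | S_1,…,S_j] = S_j` for `j = 1,…,T-1`. -/
def IsMartingaleMeasure {T : ℕ} (Q : Measure (Fin T → ℝ≥0)) : Prop :=
  (∀ i : Fin T, Integrable (fun ω => (ω i : ℝ)) Q) ∧
  ∀ j : Fin T, ∀ hj : j.1 + 1 < T,
    Q[(fun ω => (ω ⟨j.1 + 1, hj⟩ : ℝ)) | Flt T (j.1 + 1)] =ᵐ[Q] fun ω => (ω j : ℝ)

/-- The set `ℳ` of martingale measures calibrated to the option prices (all zero). -/
def MartMeasures {T N : ℕ} (g : Fin N → (Fin T → ℝ≥0) → ℝ) : Set (Measure (Fin T → ℝ≥0)) :=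
  {Q | IsProbabilityMeasure Q ∧ IsMartingaleMeasure Q ∧
    ∀ i, Integrable (g i) Q ∧ ∫ ω, g i ω ∂Q = 0}

/-- Two measures are equivalent. -/
def MeasEquiv {Ω : Type*} [MeasurableSpace Ω] (P Q : Measure Ω) : Prop :=
  P ≪ Q ∧ Q ≪ P

open scoped BoundedContinuousFunction

section Aux

variable {T N : ℕ}

lemma measurable_restrictPath (j : Fin (T - 1)) : Measurable (restrictPath (T := T) j) :=
  measurable_pi_lambda _ fun _ => measurable_pi_apply _

lemma continuous_optionGain (g : Fin N → (Fin T → ℝ≥0) → ℝ) (hg : ∀ i, Continuous (g i))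
    (h : Fin N → ℝ) : Continuous (optionGain g h) :=
  continuous_finset_sum _ fun i _ => continuous_const.mul (hg i)

lemma measurable_wealth (g : Fin N → (Fin T → ℝ≥0) → ℝ) (hg : ∀ i, Continuous (g i))
    (x : ℝ) (Δ : Strategy T) (hΔ : ∀ j, Measurable (Δ j)) (h : Fin N → ℝ) :
    Measurable (wealth g x Δ h) := by
  have hcoe : ∀ i : Fin T, Measurable fun ω : Fin T → ℝ≥0 => (ω i : ℝ) := fun i =>
    (measurable_pi_apply i).coe_nnreal_real
  have hs : Measurable (stockGain Δ) := by
    apply Finset.measurable_sum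
    intro j _
    exact ((hΔ j).comp (measurable_restrictPath j)).mul ((hcoe _).sub (hcoe _))
  exact (measurable_const.add hs).add (continuous_optionGain g hg h).measurable

lemma continuous_wealth (g : Fin N → (Fin T → ℝ≥0) → ℝ) (hg : ∀ i, Continuous (g i))
    (x : ℝ) (Δ : Strategy T) (hΔ : ∀ j, Continuous (Δ j)) (h : Fin N → ℝ) :
    Continuous (wealth g x Δ h) := by
  have hr : ∀ j : Fin (T - 1), Continuous (restrictPath (T := T) j) := fun j =>
    continuous_pi fun _ => continuous_apply _
  have hs : Continuous (stockGain Δ) := by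
    apply continuous_finset_sum
    intro j _
    have hcoe : ∀ i : Fin T, Continuous fun ω : Fin T → ℝ≥0 => (ω i : ℝ) := fun i =>
      NNReal.continuous_coe.comp (continuous_apply i)
    exact ((hΔ j).comp (hr j)).mul ((hcoe _).sub (hcoe _))
  exact (continuous_const.add hs).add (continuous_optionGain g hg h)

lemma integrable_U_wealth (g : Fin N → (Fin T → ℝ≥0) → ℝ) (hg : ∀ i, Continuous (g i))
    (U : ℝ → ℝ) (hUc : Continuous U) {C : ℝ} (hC : ∀ z, |U z| ≤ C)
    (P : Measure (Fin T → ℝ≥0)) [IsProbabilityMeasure P]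
    (x : ℝ) (Δ : Strategy T) (hΔ : ∀ j, Measurable (Δ j)) (h : Fin N → ℝ) :
    Integrable (fun ω => U (wealth g x Δ h ω)) P := by
  refine ⟨(hUc.measurable.comp (measurable_wealth g hg x Δ hΔ h)).aestronglyMeasurable, ?_⟩
  exact HasFiniteIntegral.of_bounded (C := C) (ae_of_all _ fun ω => by
    simpa [Real.norm_eq_abs] using hC (wealth g x Δ h ω))

/-- Dominated-convergence step for the integrals of `U ∘ wealth`. -/
lemma tendsto_integral_U (g : Fin N → (Fin T → ℝ≥0) → ℝ)
    (U : ℝ → ℝ) (hUc : Continuous U) {C : ℝ} (hC : ∀ z, |U z| ≤ C)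
    (P : Measure (Fin T → ℝ≥0)) [IsProbabilityMeasure P]
    (x : ℝ) (h : Fin N → ℝ) (Δ : Strategy T) (seq : ℕ → Strategy T)
    (hmeas : ∀ n, AEStronglyMeasurable (fun ω => U (wealth g x (seq n) h ω)) P)
    (hptw : ∀ᵐ ω ∂P, Tendsto (fun n => wealth g x (seq n) h ω) atTop (𝓝 (wealth g x Δ h ω))) :
    Tendsto (fun n => ∫ ω, U (wealth g x (seq n) h ω) ∂P) atTop
      (𝓝 (∫ ω, U (wealth g x Δ h ω) ∂P)) := by
  refine tendsto_integral_of_dominated_convergence (fun _ => C) hmeas (integrable_const C)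
    (fun n => ae_of_all _ fun ω => by
      simpa [Real.norm_eq_abs] using hC (wealth g x (seq n) h ω)) ?_
  exact hptw.mono fun ω hω => (hUc.tendsto _).comp hω

/-- Pointwise convergence of strategies gives pointwise convergence of wealth. -/
lemma tendsto_wealth (g : Fin N → (Fin T → ℝ≥0) → ℝ) (x : ℝ) (h : Fin N → ℝ)
    (Δ : Strategy T) (seq : ℕ → Strategy T) (ω : Fin T → ℝ≥0)
    (hj : ∀ j : Fin (T - 1),
      Tendsto (fun n => seq n j (restrictPath j ω)) atTop (𝓝 (Δ j (restrictPath j ω)))) :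
    Tendsto (fun n => wealth g x (seq n) h ω) atTop (𝓝 (wealth g x Δ h ω)) := by
  have hs : Tendsto (fun n => stockGain (seq n) ω) atTop (𝓝 (stockGain Δ ω)) := by
    unfold stockGain
    exact tendsto_finset_sum _ fun j _ => (hj j).mul_const _
  exact (tendsto_const_nhds.add hs).add tendsto_const_nhds

end Aux

section Main

variable {T N : ℕ}

/-- Step 2: a bounded measurable strategy can be approximated by continuous bounded ones so that
the utilities converge. -/
lemma exists_seq_continuous (T N : ℕ)
    (g : Fin N → (Fin T → ℝ≥0) → ℝ) (hg : ∀ i, Continuous (g i))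
    (U : ℝ → ℝ) (hUc : Continuous U) {C : ℝ} (hC : ∀ z, |U z| ≤ C)
    (P : Measure (Fin T → ℝ≥0)) [IsProbabilityMeasure P]
    (x : ℝ) (h : Fin N → ℝ) (Δ : Strategy T) (hΔm : ∀ j, Measurable (Δ j))
    (hΔb : ∀ j, ∃ D : ℝ, ∀ s, |Δ j s| ≤ D) :
    ∃ seq : ℕ → Strategy T, (∀ n j, Continuous (seq n j) ∧ ∃ D : ℝ, ∀ s, |seq n j s| ≤ D) ∧
      Tendsto (fun n => ∫ ω, U (wealth g x (seq n) h ω) ∂P) atTop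
        (𝓝 (∫ ω, U (wealth g x Δ h ω) ∂P)) := by
  classical
  -- the pushforward measures
  have hrm : ∀ j : Fin (T - 1), Measurable (restrictPath (T := T) j) := measurable_restrictPath
  have hint : ∀ j : Fin (T - 1), Integrable (Δ j) (P.map (restrictPath j)) := by
    intro j
    haveI : IsProbabilityMeasure (P.map (restrictPath j)) :=
      Measure.isProbabilityMeasure_map (hrm j).aemeasurable
    obtain ⟨D, hD⟩ := hΔb j
    exact ⟨(hΔm j).aestronglyMeasurable,
      HasFiniteIntegral.of_bounded (C := D) (ae_of_all _ fun s => by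
        simpa [Real.norm_eq_abs] using hD s)⟩
  -- choose bounded continuous approximations with geometric errors
  have Hex : ∀ (n : ℕ) (j : Fin (T - 1)), ∃ G : (Fin (j.1 + 1) → ℝ≥0) →ᵇ ℝ,
      (∫⁻ s, ‖Δ j s - G s‖₊ ∂(P.map (restrictPath j))) ≤ (2 : ℝ≥0∞)⁻¹ ^ n ∧
      Integrable G (P.map (restrictPath j)) := by
    intro n j
    haveI : IsProbabilityMeasure (P.map (restrictPath j)) :=
      Measure.isProbabilityMeasure_map (hrm j).aemeasurable
    exact (hint j).exists_boundedContinuous_lintegral_sub_le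
      (pow_ne_zero n (ENNReal.inv_ne_zero.mpr (by norm_num)))
  choose G hG _ using Hex
  refine ⟨fun n j => G n j, fun n j => ⟨(G n j).continuous,
    ⟨‖G n j‖, fun s => by simpa [Real.norm_eq_abs] using (G n j).norm_coe_le_norm s⟩⟩, ?_⟩
  -- error functions on the path space
  set e : Fin (T - 1) → ℕ → (Fin T → ℝ≥0) → ℝ≥0∞ :=
    fun j n ω => (‖Δ j (restrictPath j ω) - G n j (restrictPath j ω)‖₊ : ℝ≥0∞) with he
  have hemeas : ∀ j n, Measurable (e j n) := by
    intro j n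
    exact (((hΔm j).comp (hrm j)).sub
      ((G n j).continuous.measurable.comp (hrm j))).nnnorm.coe_nnreal_ennreal
  have hlint : ∀ j n, ∫⁻ ω, e j n ω ∂P ≤ (2 : ℝ≥0∞)⁻¹ ^ n := by
    intro j n
    have := hG n j
    rwa [lintegral_map (f := fun s => (‖Δ j s - G n j s‖₊ : ℝ≥0∞)) (((hΔm j).sub (G n j).continuous.measurable).nnnorm.coe_nnreal_ennreal)
      (hrm j)] at this
  -- a.e. convergence of each coordinate
  have hae : ∀ j : Fin (T - 1), ∀ᵐ ω ∂P,
      Tendsto (fun n => G n j (restrictPath j ω)) atTop (𝓝 (Δ j (restrictPath j ω))) := by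
    intro j
    have hsum : ∫⁻ ω, ∑' n, e j n ω ∂P ≠ ⊤ := by
      rw [lintegral_tsum fun n => (hemeas j n).aemeasurable]
      refine ne_top_of_le_ne_top ?_ (ENNReal.tsum_le_tsum fun n => hlint j n)
      rw [ENNReal.tsum_geometric]
      simp
    have hfin : ∀ᵐ ω ∂P, ∑' n, e j n ω < ⊤ :=
      ae_lt_top (Measurable.ennreal_tsum fun n => hemeas j n) hsum
    refine hfin.mono fun ω hω => ?_
    have h0 : Tendsto (fun n => e j n ω) atTop (𝓝 0) :=
      ENNReal.tendsto_atTop_zero_of_tsum_ne_top hω.ne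
    have h1 : Tendsto (fun n => ‖Δ j (restrictPath j ω) - G n j (restrictPath j ω)‖)
        atTop (𝓝 0) := by
      have := (ENNReal.tendsto_coe (f := atTop)
        (m := fun n => ‖Δ j (restrictPath j ω) - G n j (restrictPath j ω)‖₊) (a := 0)).mp (by simpa [he] using h0)
      have h2 := NNReal.tendsto_coe.mpr this
      simpa [coe_nnnorm] using h2
    refine tendsto_iff_norm_sub_tendsto_zero.mpr ?_
    simpa [norm_sub_rev] using h1
  have hae' : ∀ᵐ ω ∂P, ∀ j : Fin (T - 1),
      Tendsto (fun n => G n j (restrictPath j ω)) atTop (𝓝 (Δ j (restrictPath j ω))) :=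
    (ae_all_iff).mpr hae
  refine tendsto_integral_U g U hUc hC P x h Δ _ (fun n => ?_) ?_
  · exact ((hUc.comp (continuous_wealth g hg x _ (fun j => (G n j).continuous)
      h))).measurable.aestronglyMeasurable
  · exact hae'.mono fun ω hω => tendsto_wealth g x h Δ _ ω hω

/-- Step 1: a measurable strategy can be approximated by bounded measurable ones. -/
lemma exists_seq_bounded (T N : ℕ)
    (g : Fin N → (Fin T → ℝ≥0) → ℝ) (hg : ∀ i, Continuous (g i))
    (U : ℝ → ℝ) (hUc : Continuous U) {C : ℝ} (hC : ∀ z, |U z| ≤ C)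
    (P : Measure (Fin T → ℝ≥0)) [IsProbabilityMeasure P]
    (x : ℝ) (h : Fin N → ℝ) (Δ : Strategy T) (hΔm : ∀ j, Measurable (Δ j)) :
    ∃ seq : ℕ → Strategy T,
      (∀ n j, Measurable (seq n j) ∧ ∃ D : ℝ, ∀ s, |seq n j s| ≤ D) ∧
      Tendsto (fun n => ∫ ω, U (wealth g x (seq n) h ω) ∂P) atTop
        (𝓝 (∫ ω, U (wealth g x Δ h ω) ∂P)) := by
  refine ⟨fun n j s => max (-(n : ℝ)) (min (n : ℝ) (Δ j s)), fun n j => ?_, ?_⟩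
  · refine ⟨measurable_const.max (measurable_const.min (hΔm j)), ⟨(n : ℝ), fun s => ?_⟩⟩
    rw [abs_le]
    constructor
    · exact neg_le_of_neg_le (neg_le.mp (le_max_left _ _))
    · exact max_le (neg_le_self n.cast_nonneg) (min_le_left _ _)
  · refine tendsto_integral_U g U hUc hC P x h Δ _ (fun n => ?_) (ae_of_all _ fun ω => ?_)
    · exact (hUc.measurable.comp (measurable_wealth g hg x _
        (fun j => measurable_const.max (measurable_const.min (hΔm j))) h)).aestronglyMeasurable
    · refine tendsto_wealth g x h Δ _ ω fun j => ?_
      set y := Δ j (restrictPath j ω) with hy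
      have : ∀ᶠ n : ℕ in atTop, max (-(n : ℝ)) (min (n : ℝ) y) = y := by
        filter_upwards [eventually_ge_atTop ⌈|y|⌉₊] with n hn
        have hny : |y| ≤ (n : ℝ) := (Nat.le_ceil _).trans (Nat.cast_le.mpr hn)
        rw [abs_le] at hny
        rw [min_eq_right hny.2, max_eq_right hny.1]
      exact tendsto_const_nhds.congr' (by filter_upwards [this] with n hn using hn.symm)

end Main

/-- For a probability measure `P` on `ℝ_+^T` and `x > 0`, the supremum of
`E_P[U(x + (Δ·S)_T + h·g)]` over all trading strategies with measurable `Δ` equals the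
supremum over strategies in which every `Δ_j` is continuous and bounded. -/
theorem sup_utility_measurable_eq_sup_continuous_bounded
    (T N : ℕ) (hT : 1 ≤ T)
    (g : Fin N → (Fin T → ℝ≥0) → ℝ) (hg : ∀ i, Continuous (g i))
    (U : ℝ → ℝ) (hUc : Continuous U) (hUm : Monotone U) (hUb : ∃ C : ℝ, ∀ z, |U z| ≤ C)
    (P : Measure (Fin T → ℝ≥0)) [IsProbabilityMeasure P]
    (x : ℝ) (hx : 0 < x) :
    sSup {r : ℝ | ∃ Δ : Strategy T, ∃ h : Fin N → ℝ, (∀ j, Measurable (Δ j)) ∧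
        r = ∫ ω, U (wealth g x Δ h ω) ∂P}
      = sSup {r : ℝ | ∃ Δ : Strategy T, ∃ h : Fin N → ℝ,
          (∀ j, Continuous (Δ j) ∧ ∃ C : ℝ, ∀ s, |Δ j s| ≤ C) ∧
          r = ∫ ω, U (wealth g x Δ h ω) ∂P} := by
  classical
  obtain ⟨C, hC⟩ := hUb
  set A := {r : ℝ | ∃ Δ : Strategy T, ∃ h : Fin N → ℝ, (∀ j, Measurable (Δ j)) ∧
      r = ∫ ω, U (wealth g x Δ h ω) ∂P} with hA
  set B := {r : ℝ | ∃ Δ : Strategy T, ∃ h : Fin N → ℝ,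
      (∀ j, Continuous (Δ j) ∧ ∃ C : ℝ, ∀ s, |Δ j s| ≤ C) ∧
      r = ∫ ω, U (wealth g x Δ h ω) ∂P} with hB
  have hsub : B ⊆ A := by
    rintro r ⟨Δ, h, hprop, rfl⟩
    exact ⟨Δ, h, fun j => (hprop j).1.measurable, rfl⟩
  have bddA : BddAbove A := by
    refine ⟨C, fun r hr => ?_⟩
    obtain ⟨Δ, h, hm, rfl⟩ := hr
    calc ∫ ω, U (wealth g x Δ h ω) ∂P ≤ ∫ _ω, C ∂P :=
          integral_mono (integrable_U_wealth g hg U hUc hC P x Δ hm h) (integrable_const C)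
            fun ω => (le_abs_self _).trans (hC _)
      _ = C := by simp
  have bddB : BddAbove B := bddA.mono hsub
  have neB : B.Nonempty :=
    ⟨_, ⟨fun _ _ => 0, 0, fun j => ⟨continuous_const, ⟨0, fun s => by simp⟩⟩, rfl⟩⟩
  have neA : A.Nonempty := ⟨_, hsub neB.choose_spec⟩
  refine le_antisymm ?_ (csSup_le_csSup bddA neB hsub)
  refine csSup_le neA ?_
  rintro r ⟨Δ, h, hm, rfl⟩
  obtain ⟨seq1, hseq1, htend1⟩ := exists_seq_bounded T N g hg U hUc hC P x h Δ hm
  refine le_of_tendsto htend1 (Eventually.of_forall fun n => ?_)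
  obtain ⟨seq2, hseq2, htend2⟩ := exists_seq_continuous T N g hg U hUc hC P x h (seq1 n)
    (fun j => (hseq1 n j).1) (fun j => (hseq1 n j).2)
  refine le_of_tendsto htend2 (Eventually.of_forall fun m => ?_)
  exact le_csSup bddB ⟨seq2 m, h, hseq2 m, rfl⟩
end
end

section
/- Let P and Q be equivalent probability measures on a measurable space, and let C be a set of nonnegative measurable random variables such that E_Q[c] ≤ 1 for every c ∈ C. Then for every K > 0, sup_{c∈C} P(c > K) ≤ P(dQ/dP ≤ 1/√K) + 1/√K; in particular sup_{c∈C} P(c > K) → 0 as K → ∞, i.e. C is bounded in L⁰(P). -/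
open MeasureTheory Filter Topology Set
open scoped NNReal ENNReal

/-- Let `P ∼ Q` be equivalent probability measures and `C` a set of
nonnegative measurable random variables with `E_Q[c] ≤ 1` for every `c ∈ C`. Then for every
`K > 0`, `sup_{c∈C} P(c > K) ≤ P(dQ/dP ≤ 1/√K) + 1/√K`; in particular
`sup_{c∈C} P(c > K) → 0` as `K → ∞`, i.e. `C` is bounded in `L⁰(P)`. -/
theorem bounded_in_L0_of_equivalent
    {Ω : Type*} [MeasurableSpace Ω] (P Q : Measure Ω)
    [IsProbabilityMeasure P] [IsProbabilityMeasure Q]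
    (hPQ : P ≪ Q) (hQP : Q ≪ P)
    (C : Set (Ω → ℝ)) (hmeas : ∀ c ∈ C, Measurable c) (hpos : ∀ c ∈ C, ∀ ω, 0 ≤ c ω)
    (hexp : ∀ c ∈ C, ∫⁻ ω, ENNReal.ofReal (c ω) ∂Q ≤ 1) :
    (∀ K : ℝ, 0 < K →
      ⨆ c ∈ C, P {ω | K < c ω} ≤
        P {ω | Q.rnDeriv P ω ≤ ENNReal.ofReal (1 / Real.sqrt K)} +
          ENNReal.ofReal (1 / Real.sqrt K)) ∧
    Tendsto (fun K : ℝ => ⨆ c ∈ C, P {ω | K < c ω}) atTop (𝓝 0) := by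
  have hrn : Measurable (Q.rnDeriv P) := Measure.measurable_rnDeriv Q P
  have key : ∀ K : ℝ, 0 < K →
      ⨆ c ∈ C, P {ω | K < c ω} ≤
        P {ω | Q.rnDeriv P ω ≤ ENNReal.ofReal (1 / Real.sqrt K)} +
          ENNReal.ofReal (1 / Real.sqrt K) := by
    intro K hK
    have hsK : 0 < Real.sqrt K := Real.sqrt_pos.mpr hK
    set r : ℝ≥0∞ := ENNReal.ofReal (1 / Real.sqrt K) with hr
    have hr0 : r ≠ 0 := by
      simp [hr, ENNReal.ofReal_eq_zero, not_le, one_div, inv_pos, hsK]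
    have hrtop : r ≠ ∞ := ENNReal.ofReal_ne_top
    refine iSup₂_le fun c hc => ?_
    set A := {ω | K < c ω} with hA
    set B := {ω | Q.rnDeriv P ω ≤ r} with hB
    have hAm : MeasurableSet A := measurableSet_lt measurable_const (hmeas c hc)
    have hBm : MeasurableSet B := hrn measurableSet_Iic
    -- Markov: Q A ≤ (ofReal K)⁻¹
    have hQA : ENNReal.ofReal K * Q A ≤ 1 := by
      calc ENNReal.ofReal K * Q A
          ≤ ENNReal.ofReal K * Q {ω | ENNReal.ofReal K ≤ ENNReal.ofReal (c ω)} := by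
            gcongr
            intro ω hω
            exact ENNReal.ofReal_le_ofReal (le_of_lt hω)
        _ ≤ ∫⁻ ω, ENNReal.ofReal (c ω) ∂Q :=
            mul_meas_ge_le_lintegral₀ ((hmeas c hc).ennreal_ofReal.aemeasurable) _
        _ ≤ 1 := hexp c hc
    -- bound P (A ∩ Bᶜ)
    have hPAB : r * P (A ∩ Bᶜ) ≤ Q A := by
      calc r * P (A ∩ Bᶜ) = ∫⁻ _ω in A ∩ Bᶜ, r ∂P := by
            rw [setLIntegral_const, mul_comm]
        _ ≤ ∫⁻ ω in A ∩ Bᶜ, Q.rnDeriv P ω ∂P := by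
            refine setLIntegral_mono' (hAm.inter hBm.compl) fun ω hω => ?_
            exact le_of_lt (lt_of_not_ge hω.2)
        _ = Q (A ∩ Bᶜ) := Measure.setLIntegral_rnDeriv hQP _
        _ ≤ Q A := measure_mono inter_subset_left
    have hPABr : P (A ∩ Bᶜ) ≤ r := by
      have h1 : r * P (A ∩ Bᶜ) ≤ (ENNReal.ofReal K)⁻¹ := by
        refine hPAB.trans ?_
        rw [ENNReal.le_inv_iff_mul_le, mul_comm]
        exact hQA
      have h2 : P (A ∩ Bᶜ) ≤ r⁻¹ * (ENNReal.ofReal K)⁻¹ := by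
        have := mul_le_mul_right h1 r⁻¹
        rwa [← mul_assoc, ENNReal.inv_mul_cancel hr0 hrtop, one_mul] at this
      refine h2.trans_eq ?_
      rw [hr, one_div, ENNReal.ofReal_inv_of_pos hsK, inv_inv,
        ← ENNReal.ofReal_inv_of_pos hK, ← ENNReal.ofReal_mul hsK.le,
        ← ENNReal.ofReal_inv_of_pos hsK]
      congr 1
      have hK0 : K ≠ 0 := ne_of_gt hK
      have hsK0 : Real.sqrt K ≠ 0 := ne_of_gt hsK
      field_simp
      exact Real.sq_sqrt hK.le
    calc P A ≤ P ((A ∩ B) ∪ (A ∩ Bᶜ)) := by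
          rw [← inter_union_distrib_left, union_compl_self, inter_univ]
      _ ≤ P (A ∩ B) + P (A ∩ Bᶜ) := measure_union_le _ _
      _ ≤ P B + r := add_le_add (measure_mono inter_subset_right) hPABr
  refine ⟨key, ?_⟩
  -- P {rnDeriv = 0} = 0
  have hP0 : P {ω | Q.rnDeriv P ω = 0} = 0 := by
    refine hPQ ?_
    have hset : MeasurableSet {ω | Q.rnDeriv P ω = 0} := hrn (measurableSet_singleton 0)
    have h1 : ∫⁻ ω in {ω | Q.rnDeriv P ω = 0}, Q.rnDeriv P ω ∂P = Q {ω | Q.rnDeriv P ω = 0} :=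
      Measure.setLIntegral_rnDeriv hQP _
    have h2 : ∫⁻ ω in {ω | Q.rnDeriv P ω = 0}, Q.rnDeriv P ω ∂P = 0 := by
      rw [setLIntegral_congr_fun hset (fun ω hω => hω),
        lintegral_zero]
    rw [← h1, h2]
  -- Sets T n decreasing to null set
  set T : ℕ → Set Ω := fun n => {ω | Q.rnDeriv P ω ≤ ENNReal.ofReal (1 / (n + 1))} with hT
  have hTtend : Tendsto (fun n => P (T n)) atTop (𝓝 0) := by
    have hanti : Antitone T := by
      intro m n hmn ω hω
      refine le_trans hω (ENNReal.ofReal_le_ofReal ?_)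
      gcongr
    have hInter : ⋂ n, T n = {ω | Q.rnDeriv P ω = 0} := by
      ext ω
      simp only [mem_iInter, hT, mem_setOf_eq]
      constructor
      · intro h
        have htend : Tendsto (fun n : ℕ => ENNReal.ofReal (1 / (n + 1))) atTop (𝓝 0) := by
          have := tendsto_one_div_add_atTop_nhds_zero_nat (𝕜 := ℝ)
          have := (ENNReal.continuous_ofReal.tendsto 0).comp this
          simpa [Function.comp_def] using this
        exact le_antisymm (ge_of_tendsto htend (Eventually.of_forall h)) (zero_le)
      · intro h n
        simp [h]
    have := tendsto_measure_iInter_atTop (μ := P) (s := T)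
      (fun n => ((hrn measurableSet_Iic).nullMeasurableSet))
      hanti ⟨0, measure_ne_top _ _⟩
    rw [hInter, hP0] at this
    exact this
  -- the bound tends to 0
  have hbound : Tendsto (fun K : ℝ =>
      P {ω | Q.rnDeriv P ω ≤ ENNReal.ofReal (1 / Real.sqrt K)} +
        ENNReal.ofReal (1 / Real.sqrt K)) atTop (𝓝 0) := by
    have hsqrtTop : Tendsto Real.sqrt atTop atTop := by
      rw [tendsto_atTop]
      intro b
      filter_upwards [eventually_ge_atTop (b ^ 2)] with K h1
      calc b ≤ |b| := le_abs_self b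
        _ = Real.sqrt (b ^ 2) := (Real.sqrt_sq_eq_abs b).symm
        _ ≤ Real.sqrt K := Real.sqrt_le_sqrt h1
    have hsqrt : Tendsto (fun K : ℝ => 1 / Real.sqrt K) atTop (𝓝 0) :=
      tendsto_const_nhds.div_atTop hsqrtTop
    have h2 : Tendsto (fun K : ℝ => ENNReal.ofReal (1 / Real.sqrt K)) atTop (𝓝 0) := by
      have := (ENNReal.continuous_ofReal.tendsto 0).comp hsqrt
      simpa [Function.comp_def] using this
    have h1 : Tendsto (fun K : ℝ =>
        P {ω | Q.rnDeriv P ω ≤ ENNReal.ofReal (1 / Real.sqrt K)}) atTop (𝓝 0) := by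
      rw [ENNReal.tendsto_nhds_zero]
      intro ε hε
      rw [ENNReal.tendsto_nhds_zero] at hTtend
      obtain ⟨n, hn⟩ := (hTtend ε hε).exists
      filter_upwards [eventually_ge_atTop (((n : ℝ) + 1) ^ 2)] with K hK
      refine le_trans (measure_mono ?_) hn
      intro ω hω
      refine le_trans hω (ENNReal.ofReal_le_ofReal ?_)
      have hn1 : (0 : ℝ) < (n : ℝ) + 1 := by positivity
      have hKpos : (0 : ℝ) < K := lt_of_lt_of_le (by positivity) hK
      rw [div_le_div_iff₀ (Real.sqrt_pos.mpr hKpos) hn1, one_mul, one_mul]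
      calc (n : ℝ) + 1 = Real.sqrt (((n : ℝ) + 1) ^ 2) := by
            rw [Real.sqrt_sq hn1.le]
        _ ≤ Real.sqrt K := Real.sqrt_le_sqrt hK
    simpa using h1.add h2
  refine tendsto_of_tendsto_of_tendsto_of_le_of_le' tendsto_const_nhds hbound ?_ ?_
  · exact Eventually.of_forall fun K => zero_le
  · filter_upwards [eventually_gt_atTop (0 : ℝ)] with K hK
    exact key K hK
end
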